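/- Convolution identity for constrained 2-dimensional walks: for all k, l ∈ N, p = (p_1, p_2) ∈ Z^2 and even m^+, m^-: w'_2(k, l; m^+, m^-; p) / ((m^+ - 2k)!(m^- - 2l)!) · binomial(m^+/2, k)^{-1} · binomial(m^- /2, l)^{-1} = Σ w'_1(m_1^+, m_1^-; p_1) · w'_1(m_2^+, m_2^-; p_2) / ((m_1^+ - k)!(m_1^- - l)!(m_2^+ - k)!(m_2^- - l)!), summed over m_1^+ + m_2^+ = m^+ with m_1^+, m_2^+ ≥ k and m_1^- + m_2^- = m^- with m_1^-, m_2^- ≥ l. -/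

import Mathlib

/-- `w'_1(s⁺, s⁻; q)`: the number (`1` or `0`) of 1-dimensional walks from `0`
to `q` with `s⁺` positive steps preceding `s⁻` negative steps. -/
def w1 (sp sn : ℕ) (q : ℤ) : ℕ := if (sp : ℤ) - (sn : ℤ) = q then 1 else 0

/-- `w'_2(k, l; m⁺, m⁻; p)` with `m⁺ = 2·np`, `m⁻ = 2·nn`: the number of
choices of `K ⊆ U` with `|K| = k`, `L ⊆ V` with `|L| = l`, together with a
2-dimensional walk from the origin to `p` whose `m⁺` positive steps (grouped
in pairs indexed by `U = Fin np`) precede its `m⁻` negative steps (grouped in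
pairs indexed by `V = Fin nn`), such that the pair of positive steps at each
`u ∈ K` is `(1, 2)` (0-indexed: `(0, 1)`) and the pair of negative steps at
each `v ∈ L` is `(1, 2)`. -/
noncomputable def W2klCount (np nn k l : ℕ) (p : Fin 2 → ℤ) : ℕ :=
  Nat.card {x : Finset (Fin np) × Finset (Fin nn) ×
      (Fin np → Fin 2 → Fin 2) × (Fin nn → Fin 2 → Fin 2) //
    x.1.card = k ∧ x.2.1.card = l ∧
    (∀ u ∈ x.1, x.2.2.1 u 0 = 0 ∧ x.2.2.1 u 1 = 1) ∧
    (∀ v ∈ x.2.1, x.2.2.2 v 0 = 0 ∧ x.2.2.2 v 1 = 1) ∧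
    ∀ j : Fin 2,
      ((Finset.univ.filter fun q : Fin np × Fin 2 => x.2.2.1 q.1 q.2 = j).card : ℤ) -
        ((Finset.univ.filter fun q : Fin nn × Fin 2 => x.2.2.2 q.1 q.2 = j).card : ℤ) = p j}

open Finset

lemma fin2_eq_one {x : Fin 2} (h : x ≠ 0) : x = 1 := by omega

/-- Counting functions to `Fin 2` with `z` zeros. -/
lemma card_fun_fin2 {α : Type*} [Fintype α] [DecidableEq α] (z : ℕ) :
    Fintype.card {g : α → Fin 2 // (univ.filter fun a => g a = 0).card = z} =
      (Fintype.card α).choose z := by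
  have e : {g : α → Fin 2 // (univ.filter fun a => g a = 0).card = z} ≃
      {s : Finset α // s.card = z} :=
    { toFun := fun g => ⟨univ.filter fun a => g.1 a = 0, g.2⟩
      invFun := fun s => ⟨fun a => if a ∈ s.1 then 0 else 1, by
        have : (univ.filter fun a => (if a ∈ s.1 then (0 : Fin 2) else 1) = 0) = s.1 := by
          ext a; by_cases h : a ∈ s.1 <;> simp [h]
        rw [this, s.2]⟩
      left_inv := fun g => by
        ext a
        rcases eq_or_ne (g.1 a) 0 with h | h
        · simp [h]
        · simp [h, fin2_eq_one h]
      right_inv := fun s => by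
        ext a
        simp only []
        by_cases h : a ∈ s.1 <;> simp [h] }
  rw [Fintype.card_congr e, Fintype.card_finset_len]

/-- The split of the zero count into the fixed part and the free part. -/
lemma count_split {α : Type*} [Fintype α] [DecidableEq α] (B : Finset α) (h : α → Fin 2)
    (F : α → Fin 2) (hF : ∀ b ∈ B, F b = h b) :
    (univ.filter fun a => F a = 0).card =
      (B.filter fun b => h b = 0).card +
        (univ.filter fun b : {a : α // a ∉ B} => F b.1 = 0).card := by
  have h1 : ((univ.filter fun a => F a = 0).filter fun a => a ∈ B).card +
      ((univ.filter fun a => F a = 0).filter fun a => ¬ a ∈ B).card =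
      (univ.filter fun a => F a = 0).card :=
    Finset.card_filter_add_card_filter_not _
  have h2 : (univ.filter fun a => F a = 0).filter (fun a => a ∈ B) =
      B.filter fun b => h b = 0 := by
    ext a
    simp only [mem_filter, mem_univ, true_and]
    constructor
    · rintro ⟨hz, hb⟩; exact ⟨hb, by rw [← hF a hb]; exact hz⟩
    · rintro ⟨hb, hz⟩; exact ⟨by rw [hF a hb]; exact hz, hb⟩
  have h3 : ((univ.filter fun a => F a = 0).filter fun a => ¬ a ∈ B).card =
      (univ.filter fun b : {a : α // a ∉ B} => F b.1 = 0).card := by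
    refine (Finset.card_bij (fun (b : {a : α // a ∉ B}) _ => b.1) ?_ ?_ ?_).symm
    · intro b hb
      simp only [mem_filter, mem_univ, true_and] at hb ⊢
      exact ⟨hb, b.2⟩
    · intro b _ b' _ hbb'; exact Subtype.ext hbb'
    · intro a ha
      simp only [mem_filter, mem_univ, true_and] at ha
      exact ⟨⟨a, ha.2⟩, by simp [ha.1], rfl⟩
  rw [h2, h3] at h1
  omega

/-- Counting functions to `Fin 2`, fixed on `B`, with `z` zeros in total. -/
lemma card_fun_fixed {α : Type*} [Fintype α] [DecidableEq α] (B : Finset α) (h : α → Fin 2)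
    (z : ℕ) :
    Fintype.card {F : α → Fin 2 //
        (∀ b ∈ B, F b = h b) ∧ (univ.filter fun a => F a = 0).card = z} =
      if (B.filter fun b => h b = 0).card ≤ z then
        (Fintype.card α - B.card).choose (z - (B.filter fun b => h b = 0).card)
      else 0 := by
  set c := (B.filter fun b => h b = 0).card with hc
  by_cases hcz : c ≤ z
  · rw [if_pos hcz]
    have e : {F : α → Fin 2 //
        (∀ b ∈ B, F b = h b) ∧ (univ.filter fun a => F a = 0).card = z} ≃
        {G : {a : α // a ∉ B} → Fin 2 //
          (univ.filter fun b : {a : α // a ∉ B} => G b = 0).card = z - c} :=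
      { toFun := fun F => ⟨fun b => F.1 b.1, by
          have := count_split B h F.1 F.2.1
          rw [F.2.2] at this
          beta_reduce at this ⊢
          omega⟩
        invFun := fun G => ⟨fun a => if ha : a ∈ B then h a else G.1 ⟨a, ha⟩, by
          constructor
          · intro b hb; simp only [dif_pos hb]
          · have hres : ∀ b : {a : α // a ∉ B},
                (if ha : b.1 ∈ B then h b.1 else G.1 ⟨b.1, ha⟩) = G.1 b := by
              intro b; rw [dif_neg b.2]
            have := count_split B h (fun a => if ha : a ∈ B then h a else G.1 ⟨a, ha⟩)
              (fun b hb => dif_pos hb)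
            rw [this]
            have : (univ.filter fun b : {a : α // a ∉ B} =>
                (if ha : b.1 ∈ B then h b.1 else G.1 ⟨b.1, ha⟩) = 0) =
                univ.filter fun b : {a : α // a ∉ B} => G.1 b = 0 := by
              apply Finset.filter_congr; intro b _; rw [hres b]
            rw [this, G.2]
            omega⟩
        left_inv := fun F => by
          apply Subtype.ext; funext a
          by_cases ha : a ∈ B
          · simp only [dif_pos ha]; exact (F.2.1 a ha).symm
          · simp only [dif_neg ha]
        right_inv := fun G => by
          apply Subtype.ext; funext b
          simp only [dif_neg b.2] }
    rw [Fintype.card_congr e, card_fun_fin2]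
    congr 1
    rw [Fintype.card_subtype_compl, Fintype.card_coe]
  · rw [if_neg hcz]
    rw [Fintype.card_eq_zero_iff]
    constructor
    rintro ⟨F, hF1, hF2⟩
    have := count_split B h F hF1
    omega

/-- Counting one side: subsets `K` of size `k` plus step functions fixed on `K`
with `a` zero-steps in total. -/
lemma posCount (n k a : ℕ) :
    Fintype.card {x : Finset (Fin n) × (Fin n → Fin 2 → Fin 2) //
        x.1.card = k ∧ (∀ u ∈ x.1, x.2 u 0 = 0 ∧ x.2 u 1 = 1) ∧
        (univ.filter fun q : Fin n × Fin 2 => x.2 q.1 q.2 = 0).card = a} =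
      n.choose k * (if k ≤ a then (2 * (n - k)).choose (a - k) else 0) := by
  classical
  -- condition translation
  have hcond : ∀ (K : Finset (Fin n)) (f : Fin n → Fin 2 → Fin 2),
      (∀ u ∈ K, f u 0 = 0 ∧ f u 1 = 1) ↔
        (∀ q ∈ K ×ˢ (univ : Finset (Fin 2)), f q.1 q.2 = q.2) := by
    intro K f
    constructor
    · rintro hf ⟨u, i⟩ hq
      rw [Finset.mem_product] at hq
      fin_cases i
      · exact (hf u hq.1).1
      · exact (hf u hq.1).2
    · intro hf u hu
      exact ⟨hf (u, 0) (by simp [Finset.mem_product, hu]),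
        hf (u, 1) (by simp [Finset.mem_product, hu])⟩
  have e1 : {x : Finset (Fin n) × (Fin n → Fin 2 → Fin 2) //
        x.1.card = k ∧ (∀ u ∈ x.1, x.2 u 0 = 0 ∧ x.2 u 1 = 1) ∧
        (univ.filter fun q : Fin n × Fin 2 => x.2 q.1 q.2 = 0).card = a} ≃
      Σ K : {K : Finset (Fin n) // K.card = k},
        {F : Fin n × Fin 2 → Fin 2 //
          (∀ q ∈ K.1 ×ˢ (univ : Finset (Fin 2)), F q = q.2) ∧
          (univ.filter fun q : Fin n × Fin 2 => F q = 0).card = a} :=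
    { toFun := fun x => ⟨⟨x.1.1, x.2.1⟩, ⟨fun q => x.1.2 q.1 q.2,
        (hcond x.1.1 x.1.2).1 x.2.2.1, x.2.2.2⟩⟩
      invFun := fun y => ⟨(y.1.1, fun u i => y.2.1 (u, i)),
        y.1.2, (hcond y.1.1 _).2 (fun q hq => y.2.2.1 q hq), y.2.2.2⟩
      left_inv := fun x => rfl
      right_inv := fun y => rfl }
  rw [Fintype.card_congr e1, Fintype.card_sigma]
  have hfiber : ∀ K : {K : Finset (Fin n) // K.card = k},
      Fintype.card {F : Fin n × Fin 2 → Fin 2 //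
          (∀ q ∈ K.1 ×ˢ (univ : Finset (Fin 2)), F q = q.2) ∧
          (univ.filter fun q : Fin n × Fin 2 => F q = 0).card = a} =
        if k ≤ a then (2 * (n - k)).choose (a - k) else 0 := by
    intro K
    rw [card_fun_fixed (K.1 ×ˢ (univ : Finset (Fin 2))) (fun q => q.2) a]
    have h1 : ((K.1 ×ˢ (univ : Finset (Fin 2))).filter fun q => q.2 = 0) =
        K.1 ×ˢ ({0} : Finset (Fin 2)) := by
      ext ⟨u, i⟩
      simp only [Finset.mem_filter, Finset.mem_product, Finset.mem_singleton, Finset.mem_univ,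
        and_true, true_and]
    have h2 : (K.1 ×ˢ ({0} : Finset (Fin 2))).card = k := by
      rw [Finset.card_product, K.2]; simp
    have h3 : (K.1 ×ˢ (univ : Finset (Fin 2))).card = k * 2 := by
      rw [Finset.card_product, K.2]; simp
    rw [h1, h2, h3]
    have h4 : Fintype.card (Fin n × Fin 2) = n * 2 := by simp
    rw [h4]
    have h5 : n * 2 - k * 2 = 2 * (n - k) := by omega
    rw [h5]
  rw [Finset.sum_congr rfl (fun K _ => hfiber K), Finset.sum_const, smul_eq_mul,
    Finset.card_univ, Fintype.card_finset_len, Fintype.card_fin]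

lemma count_le {n : ℕ} (f : Fin n → Fin 2 → Fin 2) :
    (univ.filter fun q : Fin n × Fin 2 => f q.1 q.2 = 0).card ≤ 2 * n := by
  calc (univ.filter fun q : Fin n × Fin 2 => f q.1 q.2 = 0).card
      ≤ (univ : Finset (Fin n × Fin 2)).card := Finset.card_filter_le _ _
    _ = 2 * n := by simp [mul_comm]

lemma count_one {n : ℕ} (f : Fin n → Fin 2 → Fin 2) :
    (univ.filter fun q : Fin n × Fin 2 => f q.1 q.2 = 1).card =
      2 * n - (univ.filter fun q : Fin n × Fin 2 => f q.1 q.2 = 0).card := by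
  have h1 : ((univ : Finset (Fin n × Fin 2)).filter fun q => f q.1 q.2 = 0).card +
      ((univ : Finset (Fin n × Fin 2)).filter fun q => ¬ f q.1 q.2 = 0).card =
      (univ : Finset (Fin n × Fin 2)).card :=
    Finset.card_filter_add_card_filter_not _
  have h2 : ((univ : Finset (Fin n × Fin 2)).filter fun q => ¬ f q.1 q.2 = 0) =
      (univ : Finset (Fin n × Fin 2)).filter fun q => f q.1 q.2 = 1 := by
    apply Finset.filter_congr
    intro q _
    constructor
    · exact fun h => fin2_eq_one h
    · intro h; rw [h]; decide
  have h3 : (univ : Finset (Fin n × Fin 2)).card = 2 * n := by simp [mul_comm]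
  rw [h2, h3] at h1
  omega

lemma flat_count (np nn k l : ℕ) (p : Fin 2 → ℤ) (a b : ℕ) (ha : a ≤ 2 * np)
    (hb : b ≤ 2 * nn) :
    Fintype.card {x : Finset (Fin np) × Finset (Fin nn) ×
        (Fin np → Fin 2 → Fin 2) × (Fin nn → Fin 2 → Fin 2) //
      (x.1.card = k ∧ x.2.1.card = l ∧
        (∀ u ∈ x.1, x.2.2.1 u 0 = 0 ∧ x.2.2.1 u 1 = 1) ∧
        (∀ v ∈ x.2.1, x.2.2.2 v 0 = 0 ∧ x.2.2.2 v 1 = 1) ∧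
        ∀ j : Fin 2,
          ((Finset.univ.filter fun q : Fin np × Fin 2 => x.2.2.1 q.1 q.2 = j).card : ℤ) -
            ((Finset.univ.filter fun q : Fin nn × Fin 2 => x.2.2.2 q.1 q.2 = j).card : ℤ) = p j) ∧
      (univ.filter fun q : Fin np × Fin 2 => x.2.2.1 q.1 q.2 = 0).card = a ∧
      (univ.filter fun q : Fin nn × Fin 2 => x.2.2.2 q.1 q.2 = 0).card = b} =
    if ((a : ℤ) - (b : ℤ) = p 0 ∧ ((2 * np : ℤ) - a) - ((2 * nn : ℤ) - b) = p 1) then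
      (np.choose k * (if k ≤ a then (2 * (np - k)).choose (a - k) else 0)) *
      (nn.choose l * (if l ≤ b then (2 * (nn - l)).choose (b - l) else 0))
    else 0 := by
  classical
  have hiff : ∀ x : Finset (Fin np) × Finset (Fin nn) ×
        (Fin np → Fin 2 → Fin 2) × (Fin nn → Fin 2 → Fin 2),
      ((x.1.card = k ∧ x.2.1.card = l ∧
        (∀ u ∈ x.1, x.2.2.1 u 0 = 0 ∧ x.2.2.1 u 1 = 1) ∧
        (∀ v ∈ x.2.1, x.2.2.2 v 0 = 0 ∧ x.2.2.2 v 1 = 1) ∧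
        ∀ j : Fin 2,
          ((Finset.univ.filter fun q : Fin np × Fin 2 => x.2.2.1 q.1 q.2 = j).card : ℤ) -
            ((Finset.univ.filter fun q : Fin nn × Fin 2 => x.2.2.2 q.1 q.2 = j).card : ℤ) = p j) ∧
      (univ.filter fun q : Fin np × Fin 2 => x.2.2.1 q.1 q.2 = 0).card = a ∧
      (univ.filter fun q : Fin nn × Fin 2 => x.2.2.2 q.1 q.2 = 0).card = b) ↔
      ((x.1.card = k ∧ (∀ u ∈ x.1, x.2.2.1 u 0 = 0 ∧ x.2.2.1 u 1 = 1) ∧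
          (univ.filter fun q : Fin np × Fin 2 => x.2.2.1 q.1 q.2 = 0).card = a) ∧
        (x.2.1.card = l ∧ (∀ v ∈ x.2.1, x.2.2.2 v 0 = 0 ∧ x.2.2.2 v 1 = 1) ∧
          (univ.filter fun q : Fin nn × Fin 2 => x.2.2.2 q.1 q.2 = 0).card = b) ∧
        ((a : ℤ) - (b : ℤ) = p 0 ∧ ((2 * np : ℤ) - a) - ((2 * nn : ℤ) - b) = p 1)) := by
    intro x
    constructor
    · rintro ⟨⟨h1, h2, h3, h4, h5⟩, hca, hcb⟩
      refine ⟨⟨h1, h3, hca⟩, ⟨h2, h4, hcb⟩, ?_, ?_⟩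
      · have h0 := h5 0
        rw [hca, hcb] at h0
        exact h0
      · have h1' := h5 1
        rw [count_one x.2.2.1, count_one x.2.2.2, hca, hcb] at h1'
        omega
    · rintro ⟨⟨h1, h3, hca⟩, ⟨h2, h4, hcb⟩, hc0, hc1⟩
      refine ⟨⟨h1, h2, h3, h4, ?_⟩, hca, hcb⟩
      rw [Fin.forall_fin_two]
      constructor
      · rw [hca, hcb]; exact hc0
      · rw [count_one x.2.2.1, count_one x.2.2.2, hca, hcb]
        omega
  rw [Fintype.card_congr (Equiv.subtypeEquivRight hiff)]
  by_cases hcond : ((a : ℤ) - (b : ℤ) = p 0 ∧ ((2 * np : ℤ) - a) - ((2 * nn : ℤ) - b) = p 1)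
  · rw [if_pos hcond]
    have e2 : {x : Finset (Fin np) × Finset (Fin nn) ×
        (Fin np → Fin 2 → Fin 2) × (Fin nn → Fin 2 → Fin 2) //
        (x.1.card = k ∧ (∀ u ∈ x.1, x.2.2.1 u 0 = 0 ∧ x.2.2.1 u 1 = 1) ∧
          (univ.filter fun q : Fin np × Fin 2 => x.2.2.1 q.1 q.2 = 0).card = a) ∧
        (x.2.1.card = l ∧ (∀ v ∈ x.2.1, x.2.2.2 v 0 = 0 ∧ x.2.2.2 v 1 = 1) ∧
          (univ.filter fun q : Fin nn × Fin 2 => x.2.2.2 q.1 q.2 = 0).card = b) ∧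
        ((a : ℤ) - (b : ℤ) = p 0 ∧ ((2 * np : ℤ) - a) - ((2 * nn : ℤ) - b) = p 1)} ≃
      {y : Finset (Fin np) × (Fin np → Fin 2 → Fin 2) //
          y.1.card = k ∧ (∀ u ∈ y.1, y.2 u 0 = 0 ∧ y.2 u 1 = 1) ∧
          (univ.filter fun q : Fin np × Fin 2 => y.2 q.1 q.2 = 0).card = a} ×
      {z : Finset (Fin nn) × (Fin nn → Fin 2 → Fin 2) //
          z.1.card = l ∧ (∀ v ∈ z.1, z.2 v 0 = 0 ∧ z.2 v 1 = 1) ∧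
          (univ.filter fun q : Fin nn × Fin 2 => z.2 q.1 q.2 = 0).card = b} :=
      { toFun := fun x => (⟨(x.1.1, x.1.2.2.1), x.2.1⟩, ⟨(x.1.2.1, x.1.2.2.2), x.2.2.1⟩)
        invFun := fun yz => ⟨(yz.1.1.1, yz.2.1.1, yz.1.1.2, yz.2.1.2),
          yz.1.2, yz.2.2, hcond⟩
        left_inv := fun x => rfl
        right_inv := fun yz => rfl }
    rw [Fintype.card_congr e2, Fintype.card_prod, posCount, posCount]
  · rw [if_neg hcond, Fintype.card_eq_zero_iff]
    exact ⟨fun x => hcond x.2.2.2⟩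

lemma W2_eq (np nn k l : ℕ) (p : Fin 2 → ℤ) :
    W2klCount np nn k l p =
      ∑ a ∈ Finset.range (2 * np + 1), ∑ b ∈ Finset.range (2 * nn + 1),
        if ((a : ℤ) - (b : ℤ) = p 0 ∧ ((2 * np : ℤ) - a) - ((2 * nn : ℤ) - b) = p 1) then
          (np.choose k * (if k ≤ a then (2 * (np - k)).choose (a - k) else 0)) *
          (nn.choose l * (if l ≤ b then (2 * (nn - l)).choose (b - l) else 0))
        else 0 := by
  classical
  rw [W2klCount, Nat.card_eq_fintype_card]
  set P : Finset (Fin np) × Finset (Fin nn) ×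
      (Fin np → Fin 2 → Fin 2) × (Fin nn → Fin 2 → Fin 2) → Prop := fun x =>
    x.1.card = k ∧ x.2.1.card = l ∧
    (∀ u ∈ x.1, x.2.2.1 u 0 = 0 ∧ x.2.2.1 u 1 = 1) ∧
    (∀ v ∈ x.2.1, x.2.2.2 v 0 = 0 ∧ x.2.2.2 v 1 = 1) ∧
    ∀ j : Fin 2,
      ((Finset.univ.filter fun q : Fin np × Fin 2 => x.2.2.1 q.1 q.2 = j).card : ℤ) -
        ((Finset.univ.filter fun q : Fin nn × Fin 2 => x.2.2.2 q.1 q.2 = j).card : ℤ) = p j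
    with hP
  set cmap : {x : Finset (Fin np) × Finset (Fin nn) ×
      (Fin np → Fin 2 → Fin 2) × (Fin nn → Fin 2 → Fin 2) // P x} →
      Fin (2 * np + 1) × Fin (2 * nn + 1) := fun s =>
    (⟨(univ.filter fun q : Fin np × Fin 2 => s.1.2.2.1 q.1 q.2 = 0).card,
        Nat.lt_succ_of_le (count_le _)⟩,
     ⟨(univ.filter fun q : Fin nn × Fin 2 => s.1.2.2.2 q.1 q.2 = 0).card,
        Nat.lt_succ_of_le (count_le _)⟩) with hcmap
  rw [Fintype.card_congr (Equiv.sigmaFiberEquiv cmap).symm, Fintype.card_sigma]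
  rw [Fintype.sum_prod_type]
  rw [← Fin.sum_univ_eq_sum_range (fun a => _) (2 * np + 1)]
  refine Finset.sum_congr rfl fun af _ => ?_
  rw [← Fin.sum_univ_eq_sum_range (fun b => _) (2 * nn + 1)]
  refine Finset.sum_congr rfl fun bf _ => ?_
  have hb : bf.1 ≤ 2 * nn := Nat.lt_succ_iff.mp bf.2
  have ha : af.1 ≤ 2 * np := Nat.lt_succ_iff.mp af.2
  rw [← flat_count np nn k l p af.1 bf.1 ha hb]
  apply Fintype.card_congr
  exact
    { toFun := fun s => ⟨s.1.1, s.1.2, by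
        have h := s.2
        rw [Prod.ext_iff] at h
        exact ⟨congrArg Fin.val h.1, congrArg Fin.val h.2⟩⟩
      invFun := fun x => ⟨⟨x.1, x.2.1⟩, by
        ext
        · exact x.2.2.1
        · exact x.2.2.2⟩
      left_inv := fun s => rfl
      right_inv := fun x => rfl }

lemma chooseK_zero (np k a : ℕ) (ha : a ≤ 2 * np) (h : ¬(k ≤ a ∧ k ≤ 2 * np - a)) :
    (np.choose k : ℚ) * (if k ≤ a then ((2 * (np - k)).choose (a - k) : ℚ) else 0) = 0 := by
  by_cases h1 : k ≤ a
  · rw [if_pos h1]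
    by_cases h2 : k ≤ np
    · rw [Nat.choose_eq_zero_of_lt (by omega : 2 * (np - k) < a - k)]
      simp
    · rw [Nat.choose_eq_zero_of_lt (by omega : np < k)]
      simp
  · rw [if_neg h1]; simp

lemma term_good (np nn k l a b : ℕ) (ha : a ≤ 2 * np) (hb : b ≤ 2 * nn)
    (hk1 : k ≤ a) (hk2 : k ≤ 2 * np - a) (hl1 : l ≤ b) (hl2 : l ≤ 2 * nn - b) :
    ((np.choose k : ℚ) * ((2 * (np - k)).choose (a - k) : ℚ)) *
        ((nn.choose l : ℚ) * ((2 * (nn - l)).choose (b - l) : ℚ)) /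
        (((2 * np - 2 * k).factorial : ℚ) * ((2 * nn - 2 * l).factorial : ℚ)) *
        ((np.choose k : ℚ))⁻¹ * ((nn.choose l : ℚ))⁻¹ =
      1 / (((a - k).factorial : ℚ) * ((b - l).factorial : ℚ) *
        ((2 * np - a - k).factorial : ℚ) * ((2 * nn - b - l).factorial : ℚ)) := by
  have hknp : k ≤ np := by omega
  have hlnn : l ≤ nn := by omega
  have e1 : 2 * (np - k) = 2 * np - 2 * k := by omega
  have e2 : 2 * (nn - l) = 2 * nn - 2 * l := by omega
  have c1 : (2 * np - 2 * k).choose (a - k) * (a - k).factorial * (2 * np - a - k).factorial =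
      (2 * np - 2 * k).factorial := by
    have := Nat.choose_mul_factorial_mul_factorial (show a - k ≤ 2 * np - 2 * k by omega)
    rwa [show 2 * np - 2 * k - (a - k) = 2 * np - a - k by omega] at this
  have c2 : (2 * nn - 2 * l).choose (b - l) * (b - l).factorial * (2 * nn - b - l).factorial =
      (2 * nn - 2 * l).factorial := by
    have := Nat.choose_mul_factorial_mul_factorial (show b - l ≤ 2 * nn - 2 * l by omega)
    rwa [show 2 * nn - 2 * l - (b - l) = 2 * nn - b - l by omega] at this
  have c1' : ((2 * np - 2 * k).choose (a - k) : ℚ) * ((a - k).factorial : ℚ) *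
      ((2 * np - a - k).factorial : ℚ) = ((2 * np - 2 * k).factorial : ℚ) := by
    exact_mod_cast congrArg (Nat.cast : ℕ → ℚ) c1
  have c2' : ((2 * nn - 2 * l).choose (b - l) : ℚ) * ((b - l).factorial : ℚ) *
      ((2 * nn - b - l).factorial : ℚ) = ((2 * nn - 2 * l).factorial : ℚ) := by
    exact_mod_cast congrArg (Nat.cast : ℕ → ℚ) c2
  have hCnp : (np.choose k : ℚ) ≠ 0 := Nat.cast_ne_zero.mpr (Nat.choose_pos hknp).ne'
  have hCnn : (nn.choose l : ℚ) ≠ 0 := Nat.cast_ne_zero.mpr (Nat.choose_pos hlnn).ne'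
  have f1 : ((a - k).factorial : ℚ) ≠ 0 := Nat.cast_ne_zero.mpr (Nat.factorial_ne_zero _)
  have f2 : ((b - l).factorial : ℚ) ≠ 0 := Nat.cast_ne_zero.mpr (Nat.factorial_ne_zero _)
  have f3 : ((2 * np - a - k).factorial : ℚ) ≠ 0 := Nat.cast_ne_zero.mpr (Nat.factorial_ne_zero _)
  have f4 : ((2 * nn - b - l).factorial : ℚ) ≠ 0 := Nat.cast_ne_zero.mpr (Nat.factorial_ne_zero _)
  rw [e1, e2, ← c1', ← c2']
  have g1 : ((2 * np - 2 * k).choose (a - k) : ℚ) ≠ 0 := by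
    rw [Nat.cast_ne_zero]
    exact (Nat.choose_pos (show a - k ≤ 2 * np - 2 * k by omega)).ne'
  have g2 : ((2 * nn - 2 * l).choose (b - l) : ℚ) ≠ 0 := by
    rw [Nat.cast_ne_zero]
    exact (Nat.choose_pos (show b - l ≤ 2 * nn - 2 * l by omega)).ne'
  field_simp

/-- **Lemma 11 (convolution identity)**: for all `k, l ∈ ℕ`,
`p = (p₁, p₂) ∈ ℤ²` and even `m⁺ = 2·np`, `m⁻ = 2·nn`,
`w'_2(k, l; m⁺, m⁻; p) / ((m⁺-2k)!(m⁻-2l)!) · C(m⁺/2, k)⁻¹ · C(m⁻/2, l)⁻¹`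
equals the sum over `m₁⁺ + m₂⁺ = m⁺` with `m₁⁺, m₂⁺ ≥ k` and
`m₁⁻ + m₂⁻ = m⁻` with `m₁⁻, m₂⁻ ≥ l` of
`w'_1(m₁⁺, m₁⁻; p₁) · w'_1(m₂⁺, m₂⁻; p₂) / ((m₁⁺-k)!(m₁⁻-l)!(m₂⁺-k)!(m₂⁻-l)!)`. -/
theorem convolution_identity (np nn k l : ℕ) (p : Fin 2 → ℤ) :
    (W2klCount np nn k l p : ℚ) /
        ((Nat.factorial (2 * np - 2 * k) : ℚ) * (Nat.factorial (2 * nn - 2 * l) : ℚ)) *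
        ((Nat.choose np k : ℚ))⁻¹ * ((Nat.choose nn l : ℚ))⁻¹ =
      ∑ x ∈ (Finset.HasAntidiagonal.antidiagonal (2 * np)).filter (fun x => k ≤ x.1 ∧ k ≤ x.2),
        ∑ y ∈ (Finset.HasAntidiagonal.antidiagonal (2 * nn)).filter (fun y => l ≤ y.1 ∧ l ≤ y.2),
          ((w1 x.1 y.1 (p 0) : ℚ) * (w1 x.2 y.2 (p 1) : ℚ)) /
            ((Nat.factorial (x.1 - k) : ℚ) * (Nat.factorial (y.1 - l) : ℚ) *
              (Nat.factorial (x.2 - k) : ℚ) * (Nat.factorial (y.2 - l) : ℚ)) := by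
  classical
  rw [W2_eq]
  push_cast
  simp only [Finset.sum_div, Finset.sum_mul]
  simp only [Finset.sum_filter]
  rw [Finset.Nat.sum_antidiagonal_eq_sum_range_succ
    (fun m1 m2 => if k ≤ m1 ∧ k ≤ m2 then
      ∑ y ∈ Finset.HasAntidiagonal.antidiagonal (2 * nn), (if l ≤ y.1 ∧ l ≤ y.2 then
        ((w1 m1 y.1 (p 0) : ℚ) * (w1 m2 y.2 (p 1) : ℚ)) /
          ((Nat.factorial (m1 - k) : ℚ) * (Nat.factorial (y.1 - l) : ℚ) *
            (Nat.factorial (m2 - k) : ℚ) * (Nat.factorial (y.2 - l) : ℚ)) else 0) else 0)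
    (2 * np)]
  refine Finset.sum_congr rfl fun a ha' => ?_
  have ha : a ≤ 2 * np := Nat.lt_succ_iff.mp (Finset.mem_range.mp ha')
  rw [Finset.Nat.sum_antidiagonal_eq_sum_range_succ
    (fun s1 s2 => if l ≤ s1 ∧ l ≤ s2 then
      ((w1 a s1 (p 0) : ℚ) * (w1 (2 * np - a) s2 (p 1) : ℚ)) /
        ((Nat.factorial (a - k) : ℚ) * (Nat.factorial (s1 - l) : ℚ) *
          (Nat.factorial (2 * np - a - k) : ℚ) * (Nat.factorial (s2 - l) : ℚ)) else 0)
    (2 * nn)]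
  by_cases hk : k ≤ a ∧ k ≤ 2 * np - a
  · rw [if_pos hk]
    refine Finset.sum_congr rfl fun b hb' => ?_
    have hb : b ≤ 2 * nn := Nat.lt_succ_iff.mp (Finset.mem_range.mp hb')
    by_cases hl : l ≤ b ∧ l ≤ 2 * nn - b
    · rw [if_pos hl]
      by_cases hcond : ((a : ℤ) - (b : ℤ) = p 0 ∧ 2 * (np : ℤ) - a - (2 * (nn : ℤ) - b) = p 1)
      · rw [if_pos hcond, if_pos hk.1, if_pos hl.1]
        have hw1 : w1 a b (p 0) = 1 := by rw [w1, if_pos hcond.1]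
        have hw2 : w1 (2 * np - a) (2 * nn - b) (p 1) = 1 := by
          have h2 := hcond.2
          rw [w1, if_pos (show ((2 * np - a : ℕ) : ℤ) - ((2 * nn - b : ℕ) : ℤ) = p 1 by omega)]
        rw [hw1, hw2, Nat.cast_one, one_mul]
        exact term_good np nn k l a b ha hb hk.1 hk.2 hl.1 hl.2
      · rw [if_neg hcond, zero_div, zero_mul, zero_mul]
        have hz : (w1 a b (p 0) : ℚ) * (w1 (2 * np - a) (2 * nn - b) (p 1) : ℚ) = 0 := by
          simp only [w1]
          split_ifs with h1 h2
          · exact absurd ⟨h1, by omega⟩ hcond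
          all_goals simp
        rw [hz, zero_div]
    · rw [if_neg hl]
      simp only [chooseK_zero nn l b hb hl, mul_zero, ite_self, zero_div, zero_mul]
  · rw [if_neg hk]
    refine Finset.sum_eq_zero fun b _ => ?_
    simp only [chooseK_zero np k a ha hk, zero_mul, ite_self, zero_div, zero_mul]
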